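/- Let n = 3·2^s with n ≥ 24, ζ = ζ_n, and R⁺_n = ℤ[ζ + ζ⁻¹, 1/2]. Then (1+ζ)(1+ζ̄) is a unit of R⁺_n that is not a square in (R⁺_n)^×. -/

import Mathlib

set_option synthInstance.maxHeartbeats 400000
set_option maxHeartbeats 1000000

open Polynomial IntermediateField

lemma aux_pow_add_inv_pow_mem (ζ : ℂ) (hζ0 : ζ ≠ 0) (k : ℕ) :
    ζ ^ k + (ζ ^ k)⁻¹ ∈ Algebra.adjoin ℤ ({ζ + ζ⁻¹} : Set ℂ) := by
  set A := Algebra.adjoin ℤ ({ζ + ζ⁻¹} : Set ℂ)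
  have key : ∀ m : ℕ, (ζ ^ m + (ζ ^ m)⁻¹ ∈ A) ∧ (ζ ^ (m+1) + (ζ ^ (m+1))⁻¹ ∈ A) := by
    intro m
    induction m with
    | zero =>
      constructor
      · simpa using A.add_mem A.one_mem A.one_mem
      · rw [zero_add, pow_one]; exact Algebra.subset_adjoin (Set.mem_singleton _)
    | succ m ih =>
      refine ⟨ih.2, ?_⟩
      have hid : ζ ^ (m+2) + (ζ ^ (m+2))⁻¹ =
          (ζ + ζ⁻¹) * (ζ ^ (m+1) + (ζ ^ (m+1))⁻¹) - (ζ ^ m + (ζ ^ m)⁻¹) := by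
        field_simp
        ring
      rw [hid]
      exact A.sub_mem (A.mul_mem (Algebra.subset_adjoin (Set.mem_singleton _)) ih.2) ih.1
  exact (key k).1

lemma aux_eval_neg_one (s : ℕ) (hs : 3 ≤ s) :
    Polynomial.eval (-1 : ℤ) (Polynomial.cyclotomic (3 * 2 ^ s) ℤ) = 1 := by
  obtain ⟨t, rfl⟩ : ∃ t, s = t + 1 := ⟨s - 1, by omega⟩
  have ht : 2 ≤ t := by omega
  have h2 : (2:ℕ) ∣ 3 * 2 ^ t := Dvd.dvd.mul_left (dvd_pow_self 2 (by omega)) 3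
  rw [show 3 * 2 ^ (t+1) = (3 * 2 ^ t) * 2 by ring,
    ← cyclotomic_expand_eq_cyclotomic Nat.prime_two h2, expand_eval]
  norm_num
  refine eval_one_cyclotomic_not_prime_pow ?_
  intro p hp k hk
  have h3 : (3:ℕ) ∣ p ^ k := hk ▸ Dvd.intro _ rfl
  have h2' : (2:ℕ) ∣ p ^ k := hk ▸ h2
  have hk0 : k ≠ 0 := by rintro rfl; simp at hk; omega
  have hp3 : p = 3 := ((Nat.prime_dvd_prime_iff_eq Nat.prime_three hp).1
    (Nat.Prime.dvd_of_dvd_pow Nat.prime_three h3)).symm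
  have hp2 : p = 2 := ((Nat.prime_dvd_prime_iff_eq Nat.prime_two hp).1
    (Nat.Prime.dvd_of_dvd_pow Nat.prime_two h2')).symm
  omega

lemma aux_prod_one_add (s n : ℕ) (hn : n = 3 * 2 ^ s) (hn24 : 24 ≤ n)
    (ζ : ℂ) (hζ : IsPrimitiveRoot ζ n) :
    ∏ μ ∈ primitiveRoots n ℂ, (1 + μ) = 1 := by
  have hs : 3 ≤ s := by
    rcases Nat.lt_or_ge s 3 with h | h
    · interval_cases s <;> omega
    · exact h
  have hpos : 0 < n := by omega
  have hcyc : cyclotomic n ℂ = ∏ μ ∈ primitiveRoots n ℂ, (X - C μ) :=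
    cyclotomic_eq_prod_X_sub_primitiveRoots hζ
  have heval : eval (-1 : ℂ) (cyclotomic n ℂ) = 1 := by
    have : cyclotomic n ℂ = map (Int.castRingHom ℂ) (cyclotomic n ℤ) :=
      (map_cyclotomic_int n ℂ).symm
    rw [this, show (-1 : ℂ) = ((-1 : ℤ) : ℂ) by norm_num, eval_intCast_map]
    simp only [Int.cast_id]
    rw [hn, aux_eval_neg_one s hs]
    norm_num
  have hcard : (primitiveRoots n ℂ).card = Nat.totient n := hζ.card_primitiveRoots
  have heven : Even (Nat.totient n) := Nat.totient_even (by omega)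
  have h2 : eval (-1 : ℂ) (cyclotomic n ℂ) = ∏ μ ∈ primitiveRoots n ℂ, (-(1 + μ)) := by
    rw [hcyc, eval_prod]
    refine Finset.prod_congr rfl fun μ _ => by simp; ring
  have h3 : ∏ μ ∈ primitiveRoots n ℂ, (-(1 + μ)) =
      (-1 : ℂ) ^ (primitiveRoots n ℂ).card * ∏ μ ∈ primitiveRoots n ℂ, (1 + μ) := by
    rw [← Finset.prod_const, ← Finset.prod_mul_distrib]
    simp
  rw [h3, hcard, heven.neg_one_pow, one_mul] at h2
  rw [← h2, heval]

lemma aux_prod_u (s n : ℕ) (hn : n = 3 * 2 ^ s) (hn24 : 24 ≤ n)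
    (ζ : ℂ) (hζ : IsPrimitiveRoot ζ n) :
    ∏ μ ∈ primitiveRoots n ℂ, (2 + (μ + μ⁻¹)) = 1 := by
  have hpos : 0 < n := by omega
  have hne0 : ∀ μ ∈ primitiveRoots n ℂ, μ ≠ 0 := fun μ hμ =>
    ((mem_primitiveRoots hpos).1 hμ).ne_zero (by omega)
  have hstep : ∏ μ ∈ primitiveRoots n ℂ, (2 + (μ + μ⁻¹)) =
      ∏ μ ∈ primitiveRoots n ℂ, ((1 + μ) * (1 + μ⁻¹)) := by
    refine Finset.prod_congr rfl fun μ hμ => ?_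
    have h0 := hne0 μ hμ
    field_simp
    ring
  rw [hstep, Finset.prod_mul_distrib]
  have hinvprod : ∏ μ ∈ primitiveRoots n ℂ, (1 + μ⁻¹) =
      ∏ μ ∈ primitiveRoots n ℂ, (1 + μ) := by
    refine Finset.prod_nbij' (fun μ => μ⁻¹) (fun μ => μ⁻¹) ?_ ?_ ?_ ?_ ?_
    · intro μ hμ
      exact (mem_primitiveRoots hpos).2 ((mem_primitiveRoots hpos).1 hμ).inv
    · intro μ hμ
      exact (mem_primitiveRoots hpos).2 ((mem_primitiveRoots hpos).1 hμ).inv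
    · intro μ hμ; simp
    · intro μ hμ; simp
    · intro μ hμ; rfl
  rw [hinvprod, aux_prod_one_add s n hn hn24 ζ hζ, one_mul]

lemma aux_quad_finrank (F : IntermediateField ℚ ℂ) (x a b : ℂ)
    (ha : a ∈ F) (hb : b ∈ F) (hx : x ^ 2 = a * x + b) :
    IsIntegral F x ∧ Module.finrank F F⟮x⟯ ≤ 2 := by
  set p : Polynomial F := X ^ 2 + (C (-⟨a, ha⟩) * X + C (-⟨b, hb⟩)) with hp
  have hdlin : (C (-(⟨a, ha⟩ : F)) * X + C (-(⟨b, hb⟩ : F))).degree ≤ 1 := degree_linear_le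
  have hmon : p.Monic := monic_X_pow_add (lt_of_le_of_lt hdlin (by norm_num))
  have haev : Polynomial.aeval x p = 0 := by
    simp only [hp, map_add, map_mul, map_pow, aeval_X, aeval_C]
    have h1 : (algebraMap F ℂ) (-⟨a, ha⟩) = -a := rfl
    have h2 : (algebraMap F ℂ) (-⟨b, hb⟩) = -b := rfl
    rw [h1, h2, hx]; ring
  have hint : IsIntegral F x := ⟨p, hmon, haev⟩
  refine ⟨hint, ?_⟩
  rw [adjoin.finrank hint]
  have hdeg : (minpoly F x).degree ≤ p.degree := minpoly.degree_le_of_ne_zero _ _ hmon.ne_zero haev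
  have hdeg2 : p.degree ≤ (2 : ℕ) := by
    apply le_trans (degree_add_le _ _)
    simp only [degree_X_pow, max_le_iff]
    exact ⟨le_refl _, le_trans hdlin (by norm_num)⟩
  exact natDegree_le_iff_degree_le.2 (hdeg.trans hdeg2)

/-- For `n = 3·2^s ≥ 24`: the element `(1+ζ)(1+ζ̄)` (with `ζ̄ = ζ⁻¹`) is a unit of
`R⁺ = ℤ[ζ + ζ⁻¹, 1/2]` that is not the square of a unit of `R⁺`. -/
theorem unit_not_square_three_two_power (s n : ℕ) (hn : n = 3 * 2 ^ s) (hn24 : 24 ≤ n)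
    (ζ : ℂ) (hζ : IsPrimitiveRoot ζ n) :
    (1 + ζ) * (1 + ζ⁻¹) ∈ Algebra.adjoin ℤ ({ζ + ζ⁻¹, 2⁻¹} : Set ℂ) ∧
    ((1 + ζ) * (1 + ζ⁻¹))⁻¹ ∈ Algebra.adjoin ℤ ({ζ + ζ⁻¹, 2⁻¹} : Set ℂ) ∧
    ¬ ∃ w : ℂ, w ∈ Algebra.adjoin ℤ ({ζ + ζ⁻¹, 2⁻¹} : Set ℂ) ∧
      w⁻¹ ∈ Algebra.adjoin ℤ ({ζ + ζ⁻¹, 2⁻¹} : Set ℂ) ∧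
      w ^ 2 = (1 + ζ) * (1 + ζ⁻¹) := by
  have hs : 3 ≤ s := by
    rcases Nat.lt_or_ge s 3 with h | h
    · interval_cases s <;> omega
    · exact h
  have hpos : 0 < n := by omega
  have hζ0 : ζ ≠ 0 := hζ.ne_zero (by omega)
  haveI : NeZero n := ⟨by omega⟩
  set A := Algebra.adjoin ℤ ({ζ + ζ⁻¹, 2⁻¹} : Set ℂ) with hA
  have hcA : ζ + ζ⁻¹ ∈ A := Algebra.subset_adjoin (Set.mem_insert _ _)
  have h2A : (2 : ℂ) ∈ A := by
    rw [show (2:ℂ) = 1 + 1 by norm_num]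
    exact A.add_mem A.one_mem A.one_mem
  have hu : (1 + ζ) * (1 + ζ⁻¹) = 2 + (ζ + ζ⁻¹) := by field_simp; ring
  have hmono : Algebra.adjoin ℤ ({ζ + ζ⁻¹} : Set ℂ) ≤ A :=
    Algebra.adjoin_mono (by intro x hx; rw [hx]; exact Set.mem_insert _ _)
  refine ⟨by rw [hu]; exact A.add_mem h2A hcA, ?_, ?_⟩
  · -- inverse is in A
    have hζmem : ζ ∈ primitiveRoots n ℂ := (mem_primitiveRoots hpos).2 hζ
    have hprod := aux_prod_u s n hn hn24 ζ hζ
    rw [← Finset.mul_prod_erase _ _ hζmem] at hprod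
    have hinv : ((1 + ζ) * (1 + ζ⁻¹))⁻¹ =
        ∏ μ ∈ (primitiveRoots n ℂ).erase ζ, (2 + (μ + μ⁻¹)) := by
      rw [hu]
      exact inv_eq_of_mul_eq_one_right hprod
    rw [hinv]
    refine A.prod_mem fun μ hμ => ?_
    have hμp : IsPrimitiveRoot μ n :=
      (mem_primitiveRoots hpos).1 (Finset.mem_of_mem_erase hμ)
    obtain ⟨k, hk, hkμ⟩ := hζ.eq_pow_of_pow_eq_one hμp.pow_eq_one
    rw [← hkμ]
    exact A.add_mem h2A (hmono (aux_pow_add_inv_pow_mem ζ hζ0 k))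
  · -- not a square
    rintro ⟨w, hw, -, hw2⟩
    set c : ℂ := ζ + ζ⁻¹ with hc
    set F : IntermediateField ℚ ℂ := ℚ⟮c⟯ with hF
    -- conjugation facts
    have hζn : ζ ^ n = 1 := hζ.pow_eq_one
    have hnormζ : ‖ζ‖ = 1 := Complex.norm_eq_one_of_pow_eq_one hζn (by omega)
    have hconjζ : (starRingEnd ℂ) ζ = ζ⁻¹ := by
      apply eq_inv_of_mul_eq_one_left
      rw [mul_comm, Complex.mul_conj, Complex.normSq_eq_norm_sq]
      rw [hnormζ]
      norm_num
    have hconjc : (starRingEnd ℂ) c = c := by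
      rw [hc, map_add, hconjζ, map_inv₀, hconjζ, inv_inv, add_comm]
    -- F consists of conj-fixed elements
    have hFreal : ∀ z ∈ F, (starRingEnd ℂ) z = z := by
      intro z hz
      induction hz using IntermediateField.adjoin_induction with
      | mem x hx => rw [Set.mem_singleton_iff.1 hx]; exact hconjc
      | algebraMap q => simp [Complex.conj_ofReal]
      | add x y _ _ hx hy => rw [map_add, hx, hy]
      | inv x _ hx => rw [map_inv₀, hx]
      | mul x y _ _ hx hy => rw [map_mul, hx, hy]
    have hζnotF : ζ ∉ F := by
      intro h
      have h1 := hFreal ζ h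
      rw [hconjζ] at h1
      have h2 : ζ ^ 2 = 1 := by
        have := congrArg (· * ζ) h1
        simpa [hζ0, sq, inv_mul_cancel₀] using this.symm
      have := Nat.le_of_dvd (by norm_num) (hζ.dvd_of_pow_eq_one 2 h2)
      omega
    -- integrality facts
    have hζint : IsIntegral ℚ ζ :=
      ⟨X ^ n - C 1, monic_X_pow_sub_C 1 (by omega), by simp [hζn]⟩
    have hζinvpow : ζ⁻¹ = ζ ^ (n - 1) := by
      apply inv_eq_of_mul_eq_one_right
      rw [← pow_succ']
      rw [show n - 1 + 1 = n by omega, hζn]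
    have hcint : IsIntegral ℚ c := hζint.add (hζinvpow ▸ hζint.pow (n-1))
    haveI : FiniteDimensional ℚ F := adjoin.finiteDimensional hcint
    have hcF : c ∈ F := mem_adjoin_simple_self ℚ c
    -- w ∈ F
    have hwF : w ∈ F := by
      have hle : Algebra.adjoin ℤ ({c, 2⁻¹} : Set ℂ) ≤
          Subalgebra.restrictScalars ℤ F.toSubalgebra := by
        rw [Algebra.adjoin_le_iff]
        intro x hx
        rcases hx with rfl | hx
        · exact hcF
        · rw [Set.mem_singleton_iff.1 hx]
          refine F.inv_mem ?_
          rw [show (2:ℂ) = algebraMap ℚ ℂ 2 by norm_num]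
          exact F.algebraMap_mem 2
      exact hle hw
    -- construct η with η^2 = ζ, primitive 2n-th root
    obtain ⟨i, hilt, hicop, hexp⟩ := (Complex.isPrimitiveRoot_iff ζ n (by omega)).1 hζ
    have h2n : (2:ℕ) ∣ n := by
      rw [hn]; exact Dvd.dvd.mul_left (dvd_pow_self 2 (by omega)) 3
    have hicop2 : Nat.Coprime i (2 * n) :=
      Nat.Coprime.mul_right (Nat.Coprime.coprime_dvd_right h2n hicop) hicop
    set η : ℂ := Complex.exp (2 * Real.pi * Complex.I * (i / ((2 * n : ℕ) : ℂ))) with hη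
    have hηprim : IsPrimitiveRoot η (2 * n) :=
      Complex.isPrimitiveRoot_exp_of_coprime i (2*n) (by omega) hicop2
    have hη2 : η ^ 2 = ζ := by
      rw [← hexp, hη, ← Complex.exp_nat_mul]
      congr 1
      have hn0 : (n : ℂ) ≠ 0 := by exact_mod_cast (by omega : n ≠ 0)
      push_cast
      field_simp
    have hη0 : η ≠ 0 := Complex.exp_ne_zero _
    -- (η + η⁻¹)^2 = w^2
    have hsq : (η + η⁻¹) ^ 2 = w ^ 2 := by
      rw [hw2, hu, hc, ← hη2]
      field_simp
      ring
    have hcases : η + η⁻¹ = w ∨ η + η⁻¹ = -w := by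
      have h0 : ((η + η⁻¹) - w) * ((η + η⁻¹) + w) = 0 := by linear_combination hsq
      rcases mul_eq_zero.1 h0 with h | h
      · left; exact sub_eq_zero.1 h
      · right; exact eq_neg_of_add_eq_zero_left h
    -- η is quadratic over F
    have hquad : ∃ a ∈ F, η ^ 2 = a * η + (-1) := by
      rcases hcases with h | h
      · exact ⟨w, hwF, by rw [← h]; field_simp; ring⟩
      · refine ⟨-w, F.neg_mem hwF, ?_⟩
        rw [← h]; field_simp; ring
    obtain ⟨a, haF, hηq⟩ := hquad
    obtain ⟨hηint, hηfin⟩ := aux_quad_finrank F η a (-1) haF (F.neg_mem F.one_mem) hηq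
    -- ζ is quadratic over F, with finrank exactly 2
    obtain ⟨hζintF, hζfin⟩ := aux_quad_finrank F ζ c (-1) hcF (F.neg_mem F.one_mem)
      (by rw [hc]; field_simp; ring)
    haveI : FiniteDimensional F F⟮ζ⟯ := adjoin.finiteDimensional hζintF
    haveI : FiniteDimensional F F⟮η⟯ := adjoin.finiteDimensional hηint
    have hζfin2 : Module.finrank F F⟮ζ⟯ = 2 := by
      have hne1 : Module.finrank F F⟮ζ⟯ ≠ 1 := by
        intro h1
        rw [IntermediateField.finrank_adjoin_simple_eq_one_iff] at h1
        rw [IntermediateField.mem_bot] at h1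
        obtain ⟨y, hy⟩ := h1
        exact hζnotF (hy ▸ y.2)
      have hposf : 0 < Module.finrank F F⟮ζ⟯ := Module.finrank_pos
      omega
    -- tower inequalities
    have hfζQ : Module.finrank ℚ ℚ⟮ζ⟯ = Nat.totient n := by
      rw [adjoin.finrank hζint, ← cyclotomic_eq_minpoly_rat hζ hpos, natDegree_cyclotomic]
    have hηintQ : IsIntegral ℚ η :=
      ⟨X ^ (2*n) - C 1, monic_X_pow_sub_C 1 (by omega), by simp [hηprim.pow_eq_one]⟩
    have hfηQ : Module.finrank ℚ ℚ⟮η⟯ = Nat.totient (2 * n) := by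
      rw [adjoin.finrank hηintQ, ← cyclotomic_eq_minpoly_rat hηprim (by omega),
        natDegree_cyclotomic]
    haveI : FiniteDimensional ℚ ℚ⟮ζ⟯ := adjoin.finiteDimensional hζint
    haveI : FiniteDimensional ℚ ℚ⟮η⟯ := adjoin.finiteDimensional hηintQ
    -- F⟮ζ⟯ restricted is inside ℚ⟮ζ⟯
    have hFle : F ≤ ℚ⟮ζ⟯ := by
      rw [hF, adjoin_simple_le_iff]
      have h1 : ζ ∈ ℚ⟮ζ⟯ := mem_adjoin_simple_self ℚ ζ
      exact ℚ⟮ζ⟯.add_mem h1 (ℚ⟮ζ⟯.inv_mem h1)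
    have hrestle : F⟮ζ⟯.restrictScalars ℚ ≤ ℚ⟮ζ⟯ := by
      intro x hx
      have hx' : x ∈ F⟮ζ⟯ := hx
      have hsub : F⟮ζ⟯ ≤ IntermediateField.extendScalars hFle := by
        rw [adjoin_le_iff]
        intro y hy
        rw [Set.mem_singleton_iff.1 hy]
        show ζ ∈ ℚ⟮ζ⟯
        exact mem_adjoin_simple_self ℚ ζ
      exact hsub hx'
    have hQηle : ℚ⟮η⟯ ≤ F⟮η⟯.restrictScalars ℚ := by
      rw [adjoin_simple_le_iff]
      show η ∈ F⟮η⟯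
      exact mem_adjoin_simple_self F η
    -- finrank computations
    have htow1 : Module.finrank ℚ F * Module.finrank F F⟮ζ⟯ =
        Module.finrank ℚ (F⟮ζ⟯.restrictScalars ℚ) :=
      Module.finrank_mul_finrank ℚ F F⟮ζ⟯
    have htow2 : Module.finrank ℚ F * Module.finrank F F⟮η⟯ =
        Module.finrank ℚ (F⟮η⟯.restrictScalars ℚ) :=
      Module.finrank_mul_finrank ℚ F F⟮η⟯
    haveI : FiniteDimensional ℚ (F⟮ζ⟯.restrictScalars ℚ) := FiniteDimensional.trans ℚ F F⟮ζ⟯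
    haveI : FiniteDimensional ℚ (F⟮η⟯.restrictScalars ℚ) := FiniteDimensional.trans ℚ F F⟮η⟯
    have hle1 : Module.finrank ℚ (F⟮ζ⟯.restrictScalars ℚ) ≤ Module.finrank ℚ ℚ⟮ζ⟯ :=
      LinearMap.finrank_le_finrank_of_injective
        (f := (IntermediateField.inclusion hrestle).toLinearMap)
        (fun x y h => IntermediateField.inclusion_injective hrestle (by exact h))
    have hle2 : Module.finrank ℚ ℚ⟮η⟯ ≤ Module.finrank ℚ (F⟮η⟯.restrictScalars ℚ) :=
      LinearMap.finrank_le_finrank_of_injective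
        (f := (IntermediateField.inclusion hQηle).toLinearMap)
        (fun x y h => IntermediateField.inclusion_injective hQηle (by exact h))
    -- totient computations
    have hcop3 : Nat.Coprime 3 (2 ^ s) := Nat.Coprime.pow_right s (by norm_num)
    have htotn : Nat.totient n = 2 ^ s := by
      obtain ⟨t, rfl⟩ : ∃ t, s = t + 1 := ⟨s - 1, by omega⟩
      rw [hn, Nat.totient_mul hcop3, Nat.totient_prime Nat.prime_three,
        Nat.totient_prime_pow Nat.prime_two (by omega)]
      simp [pow_succ]
      ring
    have htot2n : Nat.totient (2 * n) = 2 ^ (s + 1) := by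
      rw [hn, show 2 * (3 * 2 ^ s) = 3 * 2 ^ (s+1) by ring,
        Nat.totient_mul (Nat.Coprime.pow_right (s+1) (by norm_num)),
        Nat.totient_prime Nat.prime_three,
        Nat.totient_prime_pow Nat.prime_two (by omega)]
      simp [pow_succ]
      ring
    -- final contradiction
    have h1 : Module.finrank ℚ F * 2 ≤ 2 ^ s := by
      calc Module.finrank ℚ F * 2
          = Module.finrank ℚ F * Module.finrank F F⟮ζ⟯ := congrArg _ hζfin2.symm
        _ = Module.finrank ℚ (F⟮ζ⟯.restrictScalars ℚ) := htow1
        _ ≤ Module.finrank ℚ ℚ⟮ζ⟯ := hle1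
        _ = 2 ^ s := by rw [hfζQ, htotn]
    have h2 : 2 ^ (s + 1) ≤ Module.finrank ℚ F * 2 := by
      calc 2 ^ (s+1) = Module.finrank ℚ ℚ⟮η⟯ := by rw [hfηQ, htot2n]
        _ ≤ Module.finrank ℚ (F⟮η⟯.restrictScalars ℚ) := hle2
        _ = Module.finrank ℚ F * Module.finrank F F⟮η⟯ := htow2.symm
        _ ≤ Module.finrank ℚ F * 2 := Nat.mul_le_mul_left _ hηfin
    have : (2:ℕ) ^ s < 2 ^ (s+1) := Nat.pow_lt_pow_right (by norm_num) (by omega)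
    omega
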